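/- arXiv:1706.04768 — 2 statements merged into one kernel-verified Lean document; each statement's English description precedes it below -/
import Mathlib

section
/- Let M_{A,I} be C² real-valued functions on an open subset of ℝⁿ, indexed by A ⊆ {1,…,m}, I ⊆ {1,…,n} with 1 ≤ |A| = |I| ≤ min{m,n}, satisfying the differential constraints Σ_{i∈I}(−1)^{O_I(i)} ∂_i M_{A', I∖{i}} = 0 for all A', I with 2 ≤ |I| = |A'|+1 ≤ min{m,n}+1 (with the convention M_{∅,∅} = 1). Then for every admissible pair (A,I) and every i ∈ {1,…,n}, ∂_i M_{A,I} = Σ_{j∈I, i∉I∖{j}} (−1)^{O_I(j)+O_{I∖{j}}(i)} ∂_j M_{A,(I∖{j})∪{i}}. -/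
def ordIdx {N : ℕ} (A : Finset (Fin N)) (a : Fin N) : ℕ :=
  ((insert a A).filter (fun x => x ≤ a)).card

noncomputable def pd {n : ℕ} (i : Fin n) (f : (Fin n → ℝ) → ℝ) (x : Fin n → ℝ) : ℝ :=
  fderiv ℝ f x (Pi.single i 1)

lemma ordIdx_eq {N : ℕ} (A : Finset (Fin N)) (a : Fin N) :
    ordIdx A a = (A.filter (· ≤ a)).card + (if a ∈ A then 0 else 1) := by
  unfold ordIdx
  by_cases h : a ∈ A
  · rw [Finset.insert_eq_self.mpr h, if_pos h, add_zero]
  · rw [if_neg h, Finset.filter_insert, if_pos le_rfl,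
      Finset.card_insert_of_notMem (by simp [Finset.mem_filter, h])]

/-- If the functions `M_{A,I}` satisfy the differential constraints
`Σ_{i∈I}(−1)^{O_I(i)} ∂_i M_{A',I∖{i}} = 0`, then
`∂_i M_{A,I} = Σ_{j∈I, i∉I∖{j}} (−1)^{O_I(j)+O_{I∖{j}}(i)} ∂_j M_{A,(I∖{j})∪{i}}`. -/
theorem partial_minor_identity (m n : ℕ)
    (Ω : Set (Fin n → ℝ)) (hΩ : IsOpen Ω)
    (M : Finset (Fin m) → Finset (Fin n) → (Fin n → ℝ) → ℝ)
    (hMempty : M ∅ ∅ = fun _ => 1)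
    (hsm : ∀ A I, ContDiffOn ℝ 2 (M A I) Ω)
    (hcons : ∀ x ∈ Ω, ∀ (A' : Finset (Fin m)) (I : Finset (Fin n)),
      I.card = A'.card + 1 → 2 ≤ I.card →
      ∑ i ∈ I, (-1 : ℝ) ^ (ordIdx I i) * pd i (M A' (I.erase i)) x = 0) :
    ∀ x ∈ Ω, ∀ (A : Finset (Fin m)) (I : Finset (Fin n)),
      A.card = I.card → 1 ≤ A.card → ∀ i : Fin n,
      pd i (M A I) x =
        ∑ j, if j ∈ I ∧ i ∉ I.erase j then
          (-1 : ℝ) ^ (ordIdx I j + ordIdx (I.erase j) i) *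
            pd j (M A (insert i (I.erase j))) x
        else 0 := by
  intro x hx A I hAI hA i
  by_cases hiI : i ∈ I
  · rw [Finset.sum_eq_single_of_mem i (Finset.mem_univ i) (fun j _ hji => by
      rw [if_neg]; rintro ⟨hjI, hni⟩
      exact hni (Finset.mem_erase.mpr ⟨Ne.symm hji, hiI⟩))]
    rw [if_pos ⟨hiI, Finset.notMem_erase i I⟩, Finset.insert_erase hiI]
    have h1 : ordIdx (I.erase i) i = ordIdx I i := by
      unfold ordIdx
      rw [Finset.insert_erase hiI, Finset.insert_eq_self.mpr hiI]
    rw [h1, ← two_mul, pow_mul]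
    norm_num
  · set J := insert i I with hJdef
    have hIcard : 1 ≤ I.card := hAI ▸ hA
    have hc := hcons x hx A J (by rw [Finset.card_insert_of_notMem hiI, hAI])
      (by rw [Finset.card_insert_of_notMem hiI]; omega)
    rw [Finset.sum_insert hiI, Finset.erase_insert hiI] at hc
    have hsum : ∀ j : Fin n,
        (if j ∈ I ∧ i ∉ I.erase j then
          (-1:ℝ) ^ (ordIdx I j + ordIdx (I.erase j) i) *
            pd j (M A (insert i (I.erase j))) x else 0)
        = if j ∈ I then (-(-1:ℝ)^(ordIdx J i)) *
            ((-1:ℝ)^(ordIdx J j) * pd j (M A (J.erase j)) x) else 0 := by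
      intro j
      by_cases hj : j ∈ I
      · have hij : i ≠ j := fun h => hiI (h ▸ hj)
        have hErase : J.erase j = insert i (I.erase j) := Finset.erase_insert_of_ne hij
        rw [if_pos ⟨hj, fun h => hiI (Finset.mem_of_mem_erase h)⟩, if_pos hj, hErase]
        have e1 : ordIdx I j = (I.filter (· ≤ j)).card := by
          rw [ordIdx_eq, if_pos hj, add_zero]
        have e2 : ordIdx (I.erase j) i = ((I.erase j).filter (· ≤ i)).card + 1 := by
          rw [ordIdx_eq, if_neg (fun h => hiI (Finset.mem_of_mem_erase h))]
        have e3 : ordIdx J j = (I.filter (· ≤ j)).card + (if i ≤ j then 1 else 0) := by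
          rw [ordIdx_eq, if_pos (Finset.mem_insert_of_mem hj), add_zero, hJdef,
            Finset.filter_insert]
          split_ifs with h
          · rw [Finset.card_insert_of_notMem (by simp [hiI])]
          · rfl
        have e5 : (I.filter (· ≤ i)).card
            = ((I.erase j).filter (· ≤ i)).card + (if j ≤ i then 1 else 0) := by
          rw [Finset.filter_erase]
          split_ifs with h
          · have hm : j ∈ I.filter (fun x => x ≤ i) := Finset.mem_filter.mpr ⟨hj, h⟩
            have h1 : 1 ≤ (I.filter (fun x => x ≤ i)).card := Finset.card_pos.mpr ⟨j, hm⟩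
            rw [Finset.card_erase_of_mem hm]
            omega
          · have hm : j ∉ I.filter (fun x => x ≤ i) := fun hm => h (Finset.mem_filter.mp hm).2
            rw [Finset.erase_eq_of_notMem hm, add_zero]
        have e4 : ordIdx J i = (I.filter (· ≤ i)).card + 1 := by
          rw [ordIdx_eq, if_pos (Finset.mem_insert_self i I), add_zero, hJdef,
            Finset.filter_insert, if_pos le_rfl,
            Finset.card_insert_of_notMem (by simp [hiI])]
        rw [e1, e2, e3, e4, e5]
        rcases lt_or_gt_of_ne hij with h | h
        · rw [if_pos h.le, if_neg (not_le.mpr h)]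
          simp [pow_add, pow_succ]; ring
        · rw [if_neg (not_le.mpr h), if_pos h.le]
          simp [pow_add, pow_succ]; ring
      · rw [if_neg (fun h => hj h.1), if_neg hj]
    rw [Finset.sum_congr rfl (fun j _ => hsum j), Finset.sum_ite_mem, Finset.univ_inter,
      ← Finset.mul_sum]
    have hS : ∑ j ∈ I, (-1:ℝ)^(ordIdx J j) * pd j (M A (J.erase j)) x
        = -((-1:ℝ)^(ordIdx J i) * pd i (M A I) x) := by linarith
    rw [hS]
    have hsq : (-1:ℝ)^(ordIdx J i) * (-1:ℝ)^(ordIdx J i) = 1 := by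
      rw [← pow_add, ← two_mul, pow_mul]; norm_num
    linear_combination (-(pd i (M A I) x)) * hsq
end

section
/- Let (τ, d, v, m_{A,I}) be smooth functions on an open subset of ℝ×ℝⁿ (with d = (d_α)_{α=1,…,m}, v = (v_i)_{i=1,…,n}, m_{A,I} indexed by A ⊆ {1,…,m}, I ⊆ {1,…,n}, 1 ≤ |A| = |I| ≤ min{m,n}, convention m_{∅,∅} = τ) solving the symmetric non-conservative system: ∂_t τ + v_j∂_jτ − τ∂_jv_j = 0; ∂_t d_α + v_i∂_i d_α + Σ_{A,I,i: α∈A, i∈I}(−1)^{O_A(α)+O_I(i)} m_{A∖{α},I∖{i}} ∂_i m_{A,I} = 0; ∂_t v_i + Σ_{A,I,j: j∈I, i∉I∖{j}}(−1)^{O_I(j)+O_{I∖{j}}(i)} m_{A,(I∖{j})∪{i}} ∂_j m_{A,I} − Σ_{A,I} m_{A,I}∂_i m_{A,I} + v_j∂_jv_i − τ∂_iτ = 0; ∂_t m_{A,I} + v_j∂_j m_{A,I} + Σ_{i,j: i∈I, j∉I∖{i}}(−1)^{O_{I∖{i}}(j)+O_I(i)} m_{A,(I∖{i})∪{j}} ∂_i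 v_j − m_{A,I}∂_jv_j + Σ_{α,i: α∈A, i∈I}(−1)^{O_A(α)+O_I(i)} m_{A∖{α},I∖{i}} ∂_i d_α = 0. Write m_{αi} = m_{{α},{i}} and define λ = ½(τ² + Σ_i v_i² + Σ_α d_α² + Σ_{A,I} m_{A,I}² − 1), ω_i = τ v_i − Σ_α m_{αi} d_α, and ψ^i_{A,I} = Σ_{α∈A}(−1)^{O_A(α)+O_I(i)} m_{A∖{α},I} m_{αi} − 1_{{i∉I}} τ m_{A,I∪{i}}. Then ω satisfies the evolution equation ∂_t ω_i = ω_i ∂_jv_j − ω_j ∂_iv_j − v_j∂_jω_i + τ∂_iλ + Σ_{A,I,j: j∈I} (−1)^{O_I(j)+O_{I∖{j}}(i)} (∂_j m_{A,I}) ψ^i_{A,I∖{j}} (repeated indices summed). -/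
open Finset

/-- Time derivative `∂_t f` of a function of `(t,x) ∈ ℝ × ℝⁿ`. -/
noncomputable def pt {n : ℕ} (f : ℝ × (Fin n → ℝ) → ℝ) (p : ℝ × (Fin n → ℝ)) : ℝ :=
  fderiv ℝ f p (1, 0)

/-- Spatial partial derivative `∂_i f` of a function of `(t,x) ∈ ℝ × ℝⁿ`. -/
noncomputable def px {n : ℕ} (i : Fin n) (f : ℝ × (Fin n → ℝ) → ℝ) (p : ℝ × (Fin n → ℝ)) : ℝ :=
  fderiv ℝ f p (0, Pi.single i 1)

section Helpers

variable {n : ℕ} {f g : ℝ × (Fin n → ℝ) → ℝ} {p w : ℝ × (Fin n → ℝ)}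

lemma pdw_mul (hf : DifferentiableAt ℝ f p) (hg : DifferentiableAt ℝ g p) :
    fderiv ℝ (fun q => f q * g q) p w = fderiv ℝ f p w * g p + f p * fderiv ℝ g p w := by
  rw [fderiv_fun_mul hf hg]
  simp [smul_eq_mul]
  ring

lemma pdw_sub (hf : DifferentiableAt ℝ f p) (hg : DifferentiableAt ℝ g p) :
    fderiv ℝ (fun q => f q - g q) p w = fderiv ℝ f p w - fderiv ℝ g p w := by
  rw [fderiv_fun_sub hf hg]; simp

lemma pdw_add (hf : DifferentiableAt ℝ f p) (hg : DifferentiableAt ℝ g p) :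
    fderiv ℝ (fun q => f q + g q) p w = fderiv ℝ f p w + fderiv ℝ g p w := by
  rw [fderiv_fun_add hf hg]; simp

lemma pdw_sum {ι : Type*} {s : Finset ι} {F : ι → ℝ × (Fin n → ℝ) → ℝ}
    (hF : ∀ i ∈ s, DifferentiableAt ℝ (F i) p) :
    fderiv ℝ (fun q => ∑ i ∈ s, F i q) p w = ∑ i ∈ s, fderiv ℝ (F i) p w := by
  rw [fderiv_fun_sum hF]; simp

lemma pdw_sq (hf : DifferentiableAt ℝ f p) :
    fderiv ℝ (fun q => f q ^ 2) p w = 2 * f p * fderiv ℝ f p w := by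
  have : (fun q => f q ^ 2) = fun q => f q * f q := by ext q; ring
  rw [this, pdw_mul hf hf]; ring

lemma pdw_const_mul (c : ℝ) (hf : DifferentiableAt ℝ f p) :
    fderiv ℝ (fun q => c * f q) p w = c * fderiv ℝ f p w := by
  rw [fderiv_const_mul hf]; simp

lemma pdw_sub_const (c : ℝ) :
    fderiv ℝ (fun q => f q - c) p w = fderiv ℝ f p w := by
  rw [fderiv_sub_const]

lemma neg_one_pow_cancel (a b c : ℕ) :
    ((-1 : ℝ) ^ (a + c)) * ((-1 : ℝ) ^ (b + c)) = (-1 : ℝ) ^ (a + b) := by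
  rw [← pow_add]
  have : a + c + (b + c) = a + b + 2 * c := by ring
  rw [this, pow_add, pow_mul]
  simp

lemma ordIdx_empty {N : ℕ} (j : Fin N) : ordIdx ∅ j = 1 := by
  simp [ordIdx, Finset.filter_singleton]

lemma ordIdx_singleton_self {N : ℕ} (j : Fin N) : ordIdx {j} j = 1 := by
  simp [ordIdx, Finset.insert_idem, Finset.filter_singleton]

lemma singleton_sum_collapse {ι κ : Type*} [Fintype ι] [DecidableEq ι] [Fintype κ] (a : ι)
    (P : ι → κ → Prop) [∀ x y, Decidable (P x y)] (f : ι → κ → ℝ) :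
    (∑ x : ι, ∑ y : κ, if x ∈ ({a} : Finset ι) ∧ P x y then f x y else 0)
      = ∑ y : κ, if P a y then f a y else 0 := by
  rw [Finset.sum_eq_single_of_mem a (Finset.mem_univ a)]
  · exact Finset.sum_congr rfl fun y _ => by simp
  · intro b _ hb
    exact Finset.sum_eq_zero fun y _ => by simp [Finset.mem_singleton, hb]

end Helpers

/-- Evolution of `ω_i = τ v_i − Σ_α m_{αi} d_α` along a solution of the symmetric
non-conservative system:
`∂_t ω_i = ω_i ∂_jv_j − ω_j ∂_iv_j − v_j∂_jω_i + τ∂_iλ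
+ Σ_{A,I,j: j∈I}(−1)^{O_I(j)+O_{I∖{j}}(i)} (∂_j m_{A,I}) ψ^i_{A,I∖{j}}`. -/
theorem omega_evolution (m n : ℕ)
    (Ω : Set (ℝ × (Fin n → ℝ))) (hΩ : IsOpen Ω)
    (τ : ℝ × (Fin n → ℝ) → ℝ)
    (d : Fin m → ℝ × (Fin n → ℝ) → ℝ)
    (v : Fin n → ℝ × (Fin n → ℝ) → ℝ)
    (mf : Finset (Fin m) → Finset (Fin n) → ℝ × (Fin n → ℝ) → ℝ)
    (hmempty : mf ∅ ∅ = τ)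
    (hτ : ContDiffOn ℝ (⊤ : ℕ∞) τ Ω)
    (hd : ∀ α, ContDiffOn ℝ (⊤ : ℕ∞) (d α) Ω)
    (hv : ∀ i, ContDiffOn ℝ (⊤ : ℕ∞) (v i) Ω)
    (hmf : ∀ A I, ContDiffOn ℝ (⊤ : ℕ∞) (mf A I) Ω)
    (eq1 : ∀ p ∈ Ω,
      pt τ p + ∑ j, v j p * px j τ p - τ p * ∑ j, px j (v j) p = 0)
    (eq2 : ∀ p ∈ Ω, ∀ α,
      pt (d α) p + ∑ i, v i p * px i (d α) p +
      (∑ A : Finset (Fin m), ∑ I : Finset (Fin n), ∑ i,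
        if A.card = I.card ∧ α ∈ A ∧ i ∈ I then
          (-1 : ℝ) ^ (ordIdx A α + ordIdx I i) *
            mf (A.erase α) (I.erase i) p * px i (mf A I) p
        else 0) = 0)
    (eq3 : ∀ p ∈ Ω, ∀ i,
      pt (v i) p +
      (∑ A : Finset (Fin m), ∑ I : Finset (Fin n), ∑ j,
        if A.card = I.card ∧ j ∈ I ∧ i ∉ I.erase j then
          (-1 : ℝ) ^ (ordIdx I j + ordIdx (I.erase j) i) *
            mf A (insert i (I.erase j)) p * px j (mf A I) p
        else 0) -
      (∑ A : Finset (Fin m), ∑ I : Finset (Fin n),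
        if A.card = I.card ∧ 1 ≤ A.card then mf A I p * px i (mf A I) p else 0) +
      ∑ j, v j p * px j (v i) p - τ p * px i τ p = 0)
    (eq4 : ∀ p ∈ Ω, ∀ (A : Finset (Fin m)) (I : Finset (Fin n)),
      A.card = I.card → 1 ≤ A.card →
      pt (mf A I) p + ∑ j, v j p * px j (mf A I) p +
      (∑ i, ∑ j, if i ∈ I ∧ j ∉ I.erase i then
          (-1 : ℝ) ^ (ordIdx (I.erase i) j + ordIdx I i) *
            mf A (insert j (I.erase i)) p * px i (v j) p
        else 0) -
      mf A I p * ∑ j, px j (v j) p +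
      (∑ α, ∑ i, if α ∈ A ∧ i ∈ I then
          (-1 : ℝ) ^ (ordIdx A α + ordIdx I i) *
            mf (A.erase α) (I.erase i) p * px i (d α) p
        else 0) = 0)
    (lam : ℝ × (Fin n → ℝ) → ℝ)
    (hlam : lam = fun q => (1 / 2) * ((τ q) ^ 2 + ∑ i, (v i q) ^ 2 + ∑ α, (d α q) ^ 2 +
      (∑ A : Finset (Fin m), ∑ I : Finset (Fin n),
        if A.card = I.card ∧ 1 ≤ A.card then (mf A I q) ^ 2 else 0) - 1))
    (ω : Fin n → ℝ × (Fin n → ℝ) → ℝ)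
    (hω : ∀ i, ω i = fun q => τ q * v i q - ∑ α, mf {α} {i} q * d α q)
    (ψ : Fin n → Finset (Fin m) → Finset (Fin n) → ℝ × (Fin n → ℝ) → ℝ)
    (hψ : ∀ i A I, ψ i A I = fun q =>
      (∑ α ∈ A, (-1 : ℝ) ^ (ordIdx A α + ordIdx I i) * mf (A.erase α) I q * mf {α} {i} q)
      - (if i ∈ I then 0 else τ q * mf A (insert i I) q)) :
    ∀ p ∈ Ω, ∀ i,
      pt (ω i) p =
        ω i p * (∑ j, px j (v j) p) - (∑ j, ω j p * px i (v j) p)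
        - (∑ j, v j p * px j (ω i) p) + τ p * px i lam p
        + (∑ A : Finset (Fin m), ∑ I : Finset (Fin n), ∑ j,
            if A.card = I.card ∧ j ∈ I then
              (-1 : ℝ) ^ (ordIdx I j + ordIdx (I.erase j) i) *
                px j (mf A I) p * ψ i A (I.erase j) p
            else 0) := by
  intro p hp i
  classical
  have mem : Ω ∈ nhds p := hΩ.mem_nhds hp
  have dA : ∀ {f : ℝ × (Fin n → ℝ) → ℝ}, ContDiffOn ℝ (⊤ : ℕ∞) f Ω →
      DifferentiableAt ℝ f p := fun hf => (hf.contDiffAt mem).differentiableAt (by simp)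
  have dτ : DifferentiableAt ℝ τ p := dA hτ
  have dd : ∀ α, DifferentiableAt ℝ (d α) p := fun α => dA (hd α)
  have dv : ∀ j, DifferentiableAt ℝ (v j) p := fun j => dA (hv j)
  have dm : ∀ A I, DifferentiableAt ℝ (mf A I) p := fun A I => dA (hmf A I)
  have hsumdiff : ∀ k : Fin n,
      DifferentiableAt ℝ (fun q => ∑ α, mf {α} {k} q * d α q) p :=
    fun k => DifferentiableAt.fun_sum fun α _ => (dm _ _).fun_mul (dd α)
  -- value of ω
  have hωval : ∀ k, ω k p = τ p * v k p - ∑ α, mf {α} {k} p * d α p := fun k => by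
    simp only [hω]
  -- time derivative of ω
  have hptω : pt (ω i) p = pt τ p * v i p + τ p * pt (v i) p
      - (∑ α, pt (mf {α} {i}) p * d α p) - (∑ α, mf {α} {i} p * pt (d α) p) := by
    simp only [hω, pt]
    rw [pdw_sub (dτ.fun_mul (dv i)) (hsumdiff i), pdw_mul dτ (dv i),
      pdw_sum (fun α _ => (dm _ _).fun_mul (dd α)),
      Finset.sum_congr rfl fun α _ => pdw_mul (dm _ _) (dd α),
      Finset.sum_add_distrib]
    ring
  -- spatial derivatives of ω
  have hpxω : ∀ j, px j (ω i) p = px j τ p * v i p + τ p * px j (v i) p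
      - ∑ α, (px j (mf {α} {i}) p * d α p + mf {α} {i} p * px j (d α) p) := by
    intro j
    simp only [hω, px]
    rw [pdw_sub (dτ.fun_mul (dv i)) (hsumdiff i), pdw_mul dτ (dv i),
      pdw_sum (fun α _ => (dm _ _).fun_mul (dd α)),
      Finset.sum_congr rfl fun α _ => pdw_mul (dm _ _) (dd α)]
  -- equations solved for time derivatives
  have h1 : pt τ p = τ p * (∑ j, px j (v j) p) - ∑ j, v j p * px j τ p := by
    linear_combination eq1 p hp
  have h3 : pt (v i) p =
      -(∑ A : Finset (Fin m), ∑ I : Finset (Fin n), ∑ j,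
        if A.card = I.card ∧ j ∈ I ∧ i ∉ I.erase j then
          (-1 : ℝ) ^ (ordIdx I j + ordIdx (I.erase j) i) *
            mf A (insert i (I.erase j)) p * px j (mf A I) p
        else 0)
      + (∑ A : Finset (Fin m), ∑ I : Finset (Fin n),
        if A.card = I.card ∧ 1 ≤ A.card then mf A I p * px i (mf A I) p else 0)
      - (∑ j, v j p * px j (v i) p) + τ p * px i τ p := by
    linear_combination eq3 p hp i
  have h2 : ∀ α, pt (d α) p = -(∑ j, v j p * px j (d α) p)
      - (∑ A : Finset (Fin m), ∑ I : Finset (Fin n), ∑ j,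
        if A.card = I.card ∧ α ∈ A ∧ j ∈ I then
          (-1 : ℝ) ^ (ordIdx A α + ordIdx I j) *
            mf (A.erase α) (I.erase j) p * px j (mf A I) p
        else 0) := by
    intro α; linear_combination eq2 p hp α
  -- equation 4 specialized to singletons
  have h4 : ∀ α, pt (mf {α} {i}) p = -(∑ j, v j p * px j (mf {α} {i}) p)
      - (∑ j, mf {α} {j} p * px i (v j) p)
      + mf {α} {i} p * (∑ j, px j (v j) p) - τ p * px i (d α) p := by
    intro α
    have e := eq4 p hp {α} {i} (by simp) (by simp)
    have c1 : (∑ i' : Fin n, ∑ j : Fin n,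
        if i' ∈ ({i} : Finset (Fin n)) ∧ j ∉ (({i} : Finset (Fin n)).erase i') then
          (-1 : ℝ) ^ (ordIdx (({i} : Finset (Fin n)).erase i') j + ordIdx {i} i') *
            mf {α} (insert j (({i} : Finset (Fin n)).erase i')) p * px i' (v j) p
        else 0)
        = ∑ j, mf {α} {j} p * px i (v j) p := by
      rw [singleton_sum_collapse i (fun x y => y ∉ (({i} : Finset (Fin n)).erase x))
        (fun x y => (-1 : ℝ) ^ (ordIdx (({i} : Finset (Fin n)).erase x) y + ordIdx {i} x) *
          mf {α} (insert y (({i} : Finset (Fin n)).erase x)) p * px x (v y) p)]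
      refine Finset.sum_congr rfl fun j _ => ?_
      norm_num [Finset.erase_singleton, ordIdx_empty, ordIdx_singleton_self]
    have c2 : (∑ α' : Fin m, ∑ i' : Fin n,
        if α' ∈ ({α} : Finset (Fin m)) ∧ i' ∈ ({i} : Finset (Fin n)) then
          (-1 : ℝ) ^ (ordIdx {α} α' + ordIdx {i} i') *
            mf (({α} : Finset (Fin m)).erase α') (({i} : Finset (Fin n)).erase i') p *
            px i' (d α') p
        else 0)
        = τ p * px i (d α) p := by
      rw [singleton_sum_collapse α (fun _ y => y ∈ ({i} : Finset (Fin n)))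
        (fun x y => (-1 : ℝ) ^ (ordIdx {α} x + ordIdx {i} y) *
          mf (({α} : Finset (Fin m)).erase x) (({i} : Finset (Fin n)).erase y) p *
          px y (d x) p)]
      simp only [Finset.mem_singleton, Finset.sum_ite_eq', Finset.mem_univ, if_true,
        Finset.erase_singleton, ordIdx_singleton_self, hmempty]
      norm_num
    linear_combination e - c1 - c2
  -- derivative of lam
  have dite : ∀ (A : Finset (Fin m)) (I : Finset (Fin n)),
      DifferentiableAt ℝ
        (fun q => if A.card = I.card ∧ 1 ≤ A.card then (mf A I q) ^ 2 else 0) p := by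
    intro A I
    by_cases hP : A.card = I.card ∧ 1 ≤ A.card
    · simp only [if_pos hP]; exact (dm A I).pow 2
    · simp only [if_neg hP]; exact differentiableAt_const 0
  have hitefd : ∀ (A : Finset (Fin m)) (I : Finset (Fin n)) (w : ℝ × (Fin n → ℝ)),
      fderiv ℝ (fun q => if A.card = I.card ∧ 1 ≤ A.card then (mf A I q) ^ 2 else 0) p w
        = if A.card = I.card ∧ 1 ≤ A.card then 2 * mf A I p * fderiv ℝ (mf A I) p w
          else 0 := by
    intro A I w
    by_cases hP : A.card = I.card ∧ 1 ≤ A.card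
    · simp only [if_pos hP]; exact pdw_sq (dm A I)
    · simp only [if_neg hP, fderiv_const]; simp
  have hlamx : px i lam p = τ p * px i τ p + (∑ j, v j p * px i (v j) p)
      + (∑ α, d α p * px i (d α) p)
      + (∑ A : Finset (Fin m), ∑ I : Finset (Fin n),
        if A.card = I.card ∧ 1 ≤ A.card then mf A I p * px i (mf A I) p else 0) := by
    have D1 : DifferentiableAt ℝ (fun q => (τ q) ^ 2) p := dτ.pow 2
    have D2 : DifferentiableAt ℝ (fun q => ∑ j : Fin n, (v j q) ^ 2) p :=
      DifferentiableAt.fun_sum fun j _ => (dv j).fun_pow 2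
    have D3 : DifferentiableAt ℝ (fun q => ∑ α : Fin m, (d α q) ^ 2) p :=
      DifferentiableAt.fun_sum fun α _ => (dd α).fun_pow 2
    have D4 : DifferentiableAt ℝ (fun q => ∑ A : Finset (Fin m), ∑ I : Finset (Fin n),
        if A.card = I.card ∧ 1 ≤ A.card then (mf A I q) ^ 2 else 0) p :=
      DifferentiableAt.fun_sum fun A _ => DifferentiableAt.fun_sum fun I _ => dite A I
    simp only [hlam, px]
    rw [pdw_const_mul _ ((((D1.fun_add D2).fun_add D3).fun_add D4).fun_sub (differentiableAt_const 1)),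
      pdw_sub_const, pdw_add ((D1.fun_add D2).fun_add D3) D4, pdw_add (D1.fun_add D2) D3,
      pdw_add D1 D2, pdw_sq dτ,
      pdw_sum (fun j _ => (dv j).fun_pow 2),
      pdw_sum (fun α _ => (dd α).fun_pow 2),
      pdw_sum (fun A (_ : A ∈ Finset.univ) => DifferentiableAt.fun_sum fun I _ => dite A I),
      Finset.sum_congr rfl fun j _ => pdw_sq (dv j),
      Finset.sum_congr rfl fun α _ => pdw_sq (dd α),
      Finset.sum_congr rfl fun A _ =>
        (pdw_sum (fun I _ => dite A I)).trans
          (Finset.sum_congr rfl fun I _ => hitefd A I _)]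
    have e1 : (∑ j : Fin n, 2 * v j p * fderiv ℝ (v j) p (0, Pi.single i 1))
        = 2 * ∑ j : Fin n, v j p * fderiv ℝ (v j) p (0, Pi.single i 1) := by
      rw [Finset.mul_sum]; exact Finset.sum_congr rfl fun _ _ => by ring
    have e2 : (∑ α : Fin m, 2 * d α p * fderiv ℝ (d α) p (0, Pi.single i 1))
        = 2 * ∑ α : Fin m, d α p * fderiv ℝ (d α) p (0, Pi.single i 1) := by
      rw [Finset.mul_sum]; exact Finset.sum_congr rfl fun _ _ => by ring
    have e3 : (∑ A : Finset (Fin m), ∑ I : Finset (Fin n),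
        if A.card = I.card ∧ 1 ≤ A.card then
          2 * mf A I p * fderiv ℝ (mf A I) p (0, Pi.single i 1) else 0)
        = 2 * ∑ A : Finset (Fin m), ∑ I : Finset (Fin n),
          if A.card = I.card ∧ 1 ≤ A.card then
            mf A I p * fderiv ℝ (mf A I) p (0, Pi.single i 1) else 0 := by
      rw [Finset.mul_sum]
      refine Finset.sum_congr rfl fun A _ => ?_
      rw [Finset.mul_sum]
      exact Finset.sum_congr rfl fun I _ => by split_ifs <;> ring
    rw [e1, e2, e3]; ring
  -- transport sums
  have L1 : (∑ j, v j p * px j (ω i) p)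
      = v i p * (∑ j, v j p * px j τ p) + τ p * (∑ j, v j p * px j (v i) p)
        - (∑ α, d α p * (∑ j, v j p * px j (mf {α} {i}) p))
        - (∑ α, mf {α} {i} p * (∑ j, v j p * px j (d α) p)) := by
    have h : ∀ j : Fin n, v j p * px j (ω i) p
        = v j p * px j τ p * v i p + τ p * (v j p * px j (v i) p)
          - ∑ α, (d α p * (v j p * px j (mf {α} {i}) p)
            + mf {α} {i} p * (v j p * px j (d α) p)) := by
      intro j
      rw [hpxω j, mul_sub, mul_add, Finset.mul_sum]
      refine congrArg₂ (· - ·) (by ring) (Finset.sum_congr rfl fun α _ => by ring)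
    have hsum : ∀ α : Fin m, (∑ j : Fin n, (d α p * (v j p * px j (mf {α} {i}) p)
        + mf {α} {i} p * (v j p * px j (d α) p)))
        = d α p * (∑ j, v j p * px j (mf {α} {i}) p)
          + mf {α} {i} p * (∑ j, v j p * px j (d α) p) := by
      intro α
      rw [Finset.sum_add_distrib, ← Finset.mul_sum, ← Finset.mul_sum]
    conv_lhs => rw [Finset.sum_congr rfl fun j _ => h j, Finset.sum_sub_distrib,
      Finset.sum_add_distrib, Finset.sum_comm,
      Finset.sum_congr rfl fun α _ => hsum α, Finset.sum_add_distrib,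
      ← Finset.sum_mul, ← Finset.mul_sum]
    ring
  have L2 : (∑ j, ω j p * px i (v j) p)
      = τ p * (∑ j, v j p * px i (v j) p)
        - ∑ α, d α p * (∑ j, mf {α} {j} p * px i (v j) p) := by
    have h : ∀ j : Fin n, ω j p * px i (v j) p
        = τ p * (v j p * px i (v j) p)
          - ∑ α, d α p * (mf {α} {j} p * px i (v j) p) := by
      intro j
      simp only [hω]
      rw [sub_mul, Finset.sum_mul]
      refine congrArg₂ (· - ·) (by ring) (Finset.sum_congr rfl fun α _ => by ring)
    have hsum : ∀ α : Fin m, (∑ j : Fin n, d α p * (mf {α} {j} p * px i (v j) p))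
        = d α p * (∑ j, mf {α} {j} p * px i (v j) p) := fun α => by
      rw [← Finset.mul_sum]
    conv_lhs => rw [Finset.sum_congr rfl fun j _ => h j, Finset.sum_sub_distrib,
      ← Finset.mul_sum, Finset.sum_comm, Finset.sum_congr rfl fun α _ => hsum α]
  -- splitting the α-sums of time derivatives
  have hsplit1 : (∑ α, pt (mf {α} {i}) p * d α p)
      = -(∑ α, d α p * (∑ j, v j p * px j (mf {α} {i}) p))
        - (∑ α, d α p * (∑ j, mf {α} {j} p * px i (v j) p))
        + (∑ α, mf {α} {i} p * d α p) * (∑ j, px j (v j) p)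
        - τ p * (∑ α, d α p * px i (d α) p) := by
    have h : ∀ α, pt (mf {α} {i}) p * d α p
        = -(d α p * (∑ j, v j p * px j (mf {α} {i}) p))
          - d α p * (∑ j, mf {α} {j} p * px i (v j) p)
          + mf {α} {i} p * d α p * (∑ j, px j (v j) p)
          - τ p * (d α p * px i (d α) p) := fun α => by rw [h4 α]; ring
    conv_lhs => rw [Finset.sum_congr rfl fun α _ => h α, Finset.sum_sub_distrib,
      Finset.sum_add_distrib, Finset.sum_sub_distrib, ← Finset.sum_mul]
    rw [Finset.sum_neg_distrib, ← Finset.mul_sum]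
  have hsplit2 : (∑ α, mf {α} {i} p * pt (d α) p)
      = -(∑ α, mf {α} {i} p * (∑ j, v j p * px j (d α) p))
        - (∑ α, mf {α} {i} p *
          (∑ A : Finset (Fin m), ∑ I : Finset (Fin n), ∑ j,
            if A.card = I.card ∧ α ∈ A ∧ j ∈ I then
              (-1 : ℝ) ^ (ordIdx A α + ordIdx I j) *
                mf (A.erase α) (I.erase j) p * px j (mf A I) p
            else 0)) := by
    have h : ∀ α, mf {α} {i} p * pt (d α) p
        = -(mf {α} {i} p * (∑ j, v j p * px j (d α) p))
          - mf {α} {i} p *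
            (∑ A : Finset (Fin m), ∑ I : Finset (Fin n), ∑ j,
              if A.card = I.card ∧ α ∈ A ∧ j ∈ I then
                (-1 : ℝ) ^ (ordIdx A α + ordIdx I j) *
                  mf (A.erase α) (I.erase j) p * px j (mf A I) p
              else 0) := fun α => by rw [h2 α]; ring
    conv_lhs => rw [Finset.sum_congr rfl fun α _ => h α, Finset.sum_sub_distrib]
    rw [Finset.sum_neg_distrib]
  -- the key combinatorial identity for the ψ-sum
  have hpt : ∀ (A : Finset (Fin m)) (I : Finset (Fin n)) (j : Fin n),
      (if A.card = I.card ∧ j ∈ I then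
          (-1 : ℝ) ^ (ordIdx I j + ordIdx (I.erase j) i) * px j (mf A I) p *
            ((∑ α ∈ A, (-1 : ℝ) ^ (ordIdx A α + ordIdx (I.erase j) i) *
                mf (A.erase α) (I.erase j) p * mf {α} {i} p)
              - (if i ∈ I.erase j then 0 else τ p * mf A (insert i (I.erase j)) p))
        else 0)
      = (∑ α, if A.card = I.card ∧ α ∈ A ∧ j ∈ I then
            mf {α} {i} p * ((-1 : ℝ) ^ (ordIdx A α + ordIdx I j) *
              mf (A.erase α) (I.erase j) p * px j (mf A I) p)
          else 0)
        - (if A.card = I.card ∧ j ∈ I ∧ i ∉ I.erase j then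
            τ p * ((-1 : ℝ) ^ (ordIdx I j + ordIdx (I.erase j) i) *
              mf A (insert i (I.erase j)) p * px j (mf A I) p)
          else 0) := by
    intro A I j
    by_cases hc : A.card = I.card ∧ j ∈ I
    · rw [if_pos hc, mul_sub, Finset.mul_sum]
      refine congrArg₂ (· - ·) ?_ ?_
      · rw [Finset.sum_congr rfl fun α (_ : α ∈ Finset.univ) => show
          (if A.card = I.card ∧ α ∈ A ∧ j ∈ I then
            mf {α} {i} p * ((-1 : ℝ) ^ (ordIdx A α + ordIdx I j) *
              mf (A.erase α) (I.erase j) p * px j (mf A I) p)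
          else 0)
          = (if α ∈ A then mf {α} {i} p * ((-1 : ℝ) ^ (ordIdx A α + ordIdx I j) *
              mf (A.erase α) (I.erase j) p * px j (mf A I) p) else 0)
          from by by_cases h : α ∈ A <;> simp [h, hc.1, hc.2],
          Finset.sum_ite_mem, Finset.univ_inter]
        refine Finset.sum_congr rfl fun α _ => ?_
        linear_combination (px j (mf A I) p * mf (A.erase α) (I.erase j) p *
          mf {α} {i} p) *
          neg_one_pow_cancel (ordIdx I j) (ordIdx A α) (ordIdx (I.erase j) i)
      · by_cases h2 : i ∈ I.erase j
        · simp [hc, h2]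
        · rw [if_neg h2,
            if_pos (show A.card = I.card ∧ j ∈ I ∧ i ∉ I.erase j from ⟨hc.1, hc.2, h2⟩)]
          ring
    · rw [if_neg hc, Finset.sum_eq_zero fun α _ => if_neg (by tauto),
        if_neg (by tauto)]
      simp
  have hPsi : (∑ A : Finset (Fin m), ∑ I : Finset (Fin n), ∑ j,
        if A.card = I.card ∧ j ∈ I then
          (-1 : ℝ) ^ (ordIdx I j + ordIdx (I.erase j) i) *
            px j (mf A I) p * ψ i A (I.erase j) p
        else 0)
      = (∑ α, mf {α} {i} p *
          (∑ A : Finset (Fin m), ∑ I : Finset (Fin n), ∑ j,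
            if A.card = I.card ∧ α ∈ A ∧ j ∈ I then
              (-1 : ℝ) ^ (ordIdx A α + ordIdx I j) *
                mf (A.erase α) (I.erase j) p * px j (mf A I) p
            else 0))
        - τ p * (∑ A : Finset (Fin m), ∑ I : Finset (Fin n), ∑ j,
            if A.card = I.card ∧ j ∈ I ∧ i ∉ I.erase j then
              (-1 : ℝ) ^ (ordIdx I j + ordIdx (I.erase j) i) *
                mf A (insert i (I.erase j)) p * px j (mf A I) p
            else 0) := by
    simp only [hψ]
    rw [Finset.sum_congr rfl fun A (_ : A ∈ Finset.univ) =>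
      Finset.sum_congr rfl fun I (_ : I ∈ Finset.univ) =>
        Finset.sum_congr rfl fun j (_ : j ∈ Finset.univ) => hpt A I j]
    simp only [Finset.sum_sub_distrib]
    refine congrArg₂ (· - ·) ?_ ?_
    · rw [show (∑ A : Finset (Fin m), ∑ I : Finset (Fin n), ∑ j : Fin n, ∑ α : Fin m,
          if A.card = I.card ∧ α ∈ A ∧ j ∈ I then
            mf {α} {i} p * ((-1 : ℝ) ^ (ordIdx A α + ordIdx I j) *
              mf (A.erase α) (I.erase j) p * px j (mf A I) p)
          else 0)
        = ∑ α : Fin m, ∑ A : Finset (Fin m), ∑ I : Finset (Fin n), ∑ j : Fin n,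
          if A.card = I.card ∧ α ∈ A ∧ j ∈ I then
            mf {α} {i} p * ((-1 : ℝ) ^ (ordIdx A α + ordIdx I j) *
              mf (A.erase α) (I.erase j) p * px j (mf A I) p)
          else 0
        from (Finset.sum_congr rfl fun A _ =>
          (Finset.sum_congr rfl fun I _ => Finset.sum_comm).trans
            Finset.sum_comm).trans Finset.sum_comm]
      simp only [Finset.mul_sum, mul_ite, mul_zero]
    · simp only [Finset.mul_sum, mul_ite, mul_zero]
  -- final assembly
  rw [hptω, hωval i, L1, L2, hlamx, hPsi, h1, h3, hsplit1, hsplit2]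
  ring
end
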